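/- (Theorem 2.2(c)) Let λ ≥ 0. Any minimizer θ ∈ ℝ^{N+1} of the ℓ1-regularized objective R(θ) + λ Σ_{i=1}^N |θ_i| satisfies, for every i ∈ {1,…,N}, the soft-thresholding formula θ_i = (2/σ) ( (f̂({i}) - λ/σ)_+ - (-f̂({i}) - λ/σ)_+ ), where z_+ = max(z,0); equivalently θ_i = (2/σ) sign(f̂({i})) (|f̂({i})| - λ/σ)_+. -/

import Mathlib

open Finset

namespace Paper

noncomputable section

/-- Map a Boolean coordinate to its ±1 value. -/
def sgn (b : Bool) : ℝ := if b then 1 else -1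

/-- σ = 2√(p(1-p)). -/
def sigma (p : ℝ) : ℝ := 2 * Real.sqrt (p * (1 - p))

/-- Probability of a point x under the p-biased distribution B_p. -/
def wt (N : ℕ) (p : ℝ) (x : Fin N → Bool) : ℝ :=
  ∏ i, (if x i then p else 1 - p)

/-- Expectation under the p-biased distribution B_p (finite weighted sum). -/
def expect (N : ℕ) (p : ℝ) (g : (Fin N → Bool) → ℝ) : ℝ :=
  ∑ x : Fin N → Bool, wt N p x * g x

/-- The basis function φ_S(x) = ∏_{i∈S} (x_i - μ)/σ with μ = 2p-1. -/
def phi (N : ℕ) (p : ℝ) (S : Finset (Fin N)) (x : Fin N → Bool) : ℝ :=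
  ∏ i ∈ S, (sgn (x i) - (2 * p - 1)) / sigma p

/-- Fourier coefficient f̂(S) = E_{x~B_p}[f(x) φ_S(x)]. -/
def coeff (N : ℕ) (p : ℝ) (f : (Fin N → Bool) → ℝ) (S : Finset (Fin N)) : ℝ :=
  expect N p (fun x => f x * phi N p S x)

/-- Individual influence Inf_i(f) = E_{x~B_p}[f(x|_{i→1}) - f(x|_{i→-1})]. -/
def infl (N : ℕ) (p : ℝ) (f : (Fin N → Bool) → ℝ) (i : Fin N) : ℝ :=
  expect N p (fun x => f (Function.update x i true) - f (Function.update x i false))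

/-- x|_{I→-1}: set all coordinates in I to -1. -/
def setNeg (N : ℕ) (I : Finset (Fin N)) (x : Fin N → Bool) : Fin N → Bool :=
  fun j => if j ∈ I then false else x j

/-- Group influence Inf_I(f) = E_{x~B_p}[f(x) - f(x|_{I→-1})]. -/
def inflSet (N : ℕ) (p : ℝ) (f : (Fin N → Bool) → ℝ) (I : Finset (Fin N)) : ℝ :=
  expect N p (fun x => f x - f (setNeg N I x))

/-- Least-squares objective R(θ) for the linear datamodel (x̄_i = (1+x_i)/2 ∈ {0,1}). -/
def Rres (N : ℕ) (p : ℝ) (f : (Fin N → Bool) → ℝ) (θ : Fin (N + 1) → ℝ) : ℝ :=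
  expect N p
    (fun x => (f x - θ 0 - ∑ i : Fin N, θ i.succ * (if x i then (1 : ℝ) else 0)) ^ 2)

/-- Joint probability of a single coordinate pair (x_i, x'_i) under the ρ-correlated
distribution. -/
def pairWt (p ρ : ℝ) (b b' : Bool) : ℝ :=
  if b then (if b' then p * (1 - (1 - ρ) * (1 - p)) else p * ((1 - ρ) * (1 - p)))
  else (if b' then (1 - p) * ((1 - ρ) * p) else (1 - p) * (1 - (1 - ρ) * p))

/-- Probability of the pair (x, x') under the ρ-correlated distribution B_{p,ρ}. -/
def wtPair (N : ℕ) (p ρ : ℝ) (x x' : Fin N → Bool) : ℝ :=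
  ∏ i, pairWt p ρ (x i) (x' i)

/-- Noise stability h(ρ) = E_{(x,x')~B_{p,ρ}}[f(x) f(x')]. -/
def noiseStab (N : ℕ) (p ρ : ℝ) (f : (Fin N → Bool) → ℝ) : ℝ :=
  ∑ x : Fin N → Bool, ∑ x' : Fin N → Bool, wtPair N p ρ x x' * (f x * f x')

section Aux
variable (N : ℕ) (p : ℝ)

lemma expect_add' (g h : (Fin N → Bool) → ℝ) :
    expect N p (fun x => g x + h x) = expect N p g + expect N p h := by
  simp [expect, mul_add, Finset.sum_add_distrib]

lemma expect_smul' (s : ℝ) (g : (Fin N → Bool) → ℝ) :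
    expect N p (fun x => s * g x) = s * expect N p g := by
  simp only [expect, Finset.mul_sum]
  exact Finset.sum_congr rfl fun x _ => by ring

lemma expect_sum' {ι : Type*} (s : Finset ι) (g : ι → (Fin N → Bool) → ℝ) :
    expect N p (fun x => ∑ j ∈ s, g j x) = ∑ j ∈ s, expect N p (g j) := by
  simp only [expect, Finset.mul_sum]
  exact Finset.sum_comm

lemma wt_sum : ∀ (N : ℕ), ∑ x : Fin N → Bool, wt N p x = 1 := by
  intro N
  induction N with
  | zero => simp [wt]
  | succ n ih =>
    have heq := Fintype.sum_equiv (Fin.consEquiv (fun _ : Fin (n+1) => Bool))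
      (fun z : Bool × (Fin n → Bool) => (if z.1 then p else 1-p) * wt n p z.2)
      (wt (n+1) p)
      (fun z => by
        simp only [Fin.consEquiv_apply, wt, Fin.prod_univ_succ, Fin.cons_zero, Fin.cons_succ])
    rw [← heq, Fintype.sum_prod_type, Fintype.sum_bool]
    dsimp only
    norm_num [← Finset.mul_sum, ih]

lemma sum_split (i : Fin N) (F : (Fin N → Bool) → ℝ) :
    ∑ x : Fin N → Bool, F x
      = ∑ y : {j : Fin N // j ≠ i} → Bool,
          (F ((Equiv.funSplitAt i Bool).symm (true, y))
            + F ((Equiv.funSplitAt i Bool).symm (false, y))) := by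
  rw [← Equiv.sum_comp (Equiv.funSplitAt i Bool).symm F, Fintype.sum_prod_type,
    Fintype.sum_bool, ← Finset.sum_add_distrib]

lemma zval (i : Fin N) (b : Bool) (y : {j : Fin N // j ≠ i} → Bool) :
    ((Equiv.funSplitAt i Bool).symm (b, y)) i = b := by
  simp [Equiv.funSplitAt_symm_apply]

lemma zupdate (i : Fin N) (y : {j : Fin N // j ≠ i} → Bool) (b : Bool) :
    (Equiv.funSplitAt i Bool).symm (b, y)
      = Function.update ((Equiv.funSplitAt i Bool).symm (true, y)) i b := by
  funext j
  by_cases h : j = i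
  · subst h; simp [Equiv.funSplitAt_symm_apply]
  · simp [Equiv.funSplitAt_symm_apply, h, Function.update_of_ne h]

lemma wt_split (i : Fin N) (b : Bool) (y : {j : Fin N // j ≠ i} → Bool) :
    wt N p ((Equiv.funSplitAt i Bool).symm (b, y))
      = (if b then p else 1-p) * ∏ j : {j : Fin N // j ≠ i}, (if y j then p else 1-p) := by
  rw [wt, ← Finset.mul_prod_erase Finset.univ _ (Finset.mem_univ i), zval]
  congr 1
  rw [Finset.prod_subtype (Finset.univ.erase i)
    (p := fun j => j ≠ i) (fun x => by simp) ]
  apply Finset.prod_congr rfl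
  intro j _
  congr 1
  simp [Equiv.funSplitAt_symm_apply, j.2]

lemma expect_factor (i : Fin N) (g : (Fin N → Bool) → ℝ)
    (hg : ∀ (x : Fin N → Bool) (b : Bool), g (Function.update x i b) = g x)
    (c : Bool → ℝ) :
    expect N p (fun x => g x * c (x i))
      = expect N p g * (p * c true + (1 - p) * c false) := by
  have hgz : ∀ (b : Bool) (y : {j : Fin N // j ≠ i} → Bool),
      g ((Equiv.funSplitAt i Bool).symm (b, y))
        = g ((Equiv.funSplitAt i Bool).symm (true, y)) := by
    intro b y
    rw [zupdate, hg]
  rw [expect, expect, sum_split N i, sum_split N i (fun x => wt N p x * g x),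
    Finset.sum_mul]
  apply Finset.sum_congr rfl
  intro y _
  rw [wt_split, wt_split, zval, zval, hgz false y]
  norm_num
  ring

lemma expect_one : expect N p (fun _ => (1:ℝ)) = 1 := by
  simp [expect, wt_sum p N]

lemma expect_Xval (i : Fin N) :
    expect N p (fun x => ((if x i then (1:ℝ) else 0) - p)) = 0 := by
  have h := expect_factor N p i (fun _ => (1:ℝ)) (fun _ _ => rfl)
    (fun b => (if b then (1:ℝ) else 0) - p)
  simp only [one_mul] at h
  rw [h]
  norm_num
  right; ring

lemma expect_Xsq (i : Fin N) :
    expect N p (fun x => ((if x i then (1:ℝ) else 0) - p)^2) = p * (1 - p) := by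
  have h := expect_factor N p i (fun _ => (1:ℝ)) (fun _ _ => rfl)
    (fun b => ((if b then (1:ℝ) else 0) - p)^2)
  simp only [one_mul] at h
  rw [h, expect_one]
  norm_num
  ring

lemma expect_XX (i : Fin N) :
    expect N p (fun x => (if x i then (1:ℝ) else 0) * ((if x i then (1:ℝ) else 0) - p))
      = p * (1 - p) := by
  have h := expect_factor N p i (fun _ => (1:ℝ)) (fun _ _ => rfl)
    (fun b => (if b then (1:ℝ) else 0) * ((if b then (1:ℝ) else 0) - p))
  simp only [one_mul] at h
  rw [h, expect_one]
  norm_num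

lemma expect_XjXi (i j : Fin N) (hij : j ≠ i) :
    expect N p (fun x => (if x j then (1:ℝ) else 0) * ((if x i then (1:ℝ) else 0) - p))
      = 0 := by
  have h := expect_factor N p i (fun x => if x j then (1:ℝ) else 0)
    (fun x b => by simp [Function.update_of_ne hij])
    (fun b => (if b then (1:ℝ) else 0) - p)
  rw [h]
  norm_num
  right; ring

lemma sigma_pos {p : ℝ} (hp : 0 < p) (hp1 : p < 1) : 0 < sigma p := by
  have : 0 < p * (1 - p) := mul_pos hp (by linarith)
  have := Real.sqrt_pos.mpr this
  unfold sigma; linarith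

lemma sigma_sq {p : ℝ} (hp : 0 < p) (hp1 : p < 1) : (sigma p)^2 = 4 * (p * (1 - p)) := by
  have h0 : (0:ℝ) ≤ p * (1 - p) := le_of_lt (mul_pos hp (by linarith))
  unfold sigma
  rw [mul_pow, Real.sq_sqrt h0]
  norm_num

lemma coeff_single (f : (Fin N → Bool) → ℝ) (i : Fin N) :
    coeff N p f {i}
      = (2 / sigma p) * expect N p (fun x => f x * ((if x i then (1:ℝ) else 0) - p)) := by
  rw [coeff, ← expect_smul']
  congr 1
  funext x
  have hphi : phi N p {i} x = (2 / sigma p) * ((if x i then (1:ℝ) else 0) - p) := by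
    rw [phi, Finset.prod_singleton, sgn]
    by_cases h : x i
    · simp [h]; ring
    · simp [h]; ring
  rw [hphi]
  ring

lemma soft_min {a b lam : ℝ} (ha : 0 < a) (hl : 0 ≤ lam) (u : ℝ)
    (hu : ∀ t, a*u^2 - b*u + lam*|u| ≤ a*t^2 - b*t + lam*|t|) :
    u = (max (b - lam) 0 - max (-b - lam) 0) / (2*a) := by
  set v := (max (b - lam) 0 - max (-b - lam) 0) / (2*a) with hv
  have key : ∀ t, a*v^2 - b*v + lam*|v| + a*(t-v)^2 ≤ a*t^2 - b*t + lam*|t| := by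
    intro t
    have h1 : lam * t ≤ lam * |t| := mul_le_mul_of_nonneg_left (le_abs_self t) hl
    have h2 : lam * (-t) ≤ lam * |t| := mul_le_mul_of_nonneg_left (neg_le_abs t) hl
    rcases lt_or_ge lam b with hb | hb
    · have hm1 : max (b - lam) 0 = b - lam := max_eq_left (by linarith)
      have hm2 : max (-b - lam) 0 = 0 := max_eq_right (by linarith)
      have hveq : 2*a*v = b - lam := by
        rw [hv, hm1, hm2, sub_zero]; field_simp
      have hv0 : 0 ≤ v := by nlinarith
      rw [abs_of_nonneg hv0]
      have hb' : b = 2*a*v + lam := by linarith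
      have hident : a*v^2 - b*v + lam*v + a*(t-v)^2 = a*t^2 - b*t + lam*t := by
        rw [hb']; ring
      linarith
    rcases lt_or_ge b (-lam) with hb2 | hb2
    · have hm1 : max (b - lam) 0 = 0 := max_eq_right (by linarith)
      have hm2 : max (-b - lam) 0 = -b - lam := max_eq_left (by linarith)
      have hveq : 2*a*v = b + lam := by
        rw [hv, hm1, hm2]; field_simp; ring
      have hv0 : v ≤ 0 := by nlinarith
      rw [abs_of_nonpos hv0]
      have hb' : b = 2*a*v - lam := by linarith
      have hident : a*v^2 - b*v + lam*(-v) + a*(t-v)^2 = a*t^2 - b*t + lam*(-t) := by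
        rw [hb']; ring
      linarith
    · have hm1 : max (b - lam) 0 = 0 := max_eq_right (by linarith)
      have hm2 : max (-b - lam) 0 = 0 := max_eq_right (by linarith)
      have hv0 : v = 0 := by rw [hv, hm1, hm2]; simp
      rw [hv0]
      have hbt : b * t ≤ lam * |t| := by
        calc b * t ≤ |b * t| := le_abs_self _
          _ = |b| * |t| := abs_mul b t
          _ ≤ lam * |t| := mul_le_mul_of_nonneg_right (abs_le.2 ⟨by linarith, hb⟩) (abs_nonneg t)
      simp only [abs_zero]
      nlinarith
  have h3 := key u
  have h4 := hu v
  have h5 : (u - v)^2 = 0 := le_antisymm (by nlinarith) (sq_nonneg _)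
  have h6 : u - v = 0 := by
    exact pow_eq_zero_iff (by norm_num) |>.1 h5
  linarith

lemma split2 (G H : (Fin N → Bool) → ℝ) (u v : ℝ) (K : (Fin N → Bool) → ℝ) :
    expect N p (fun x => G x + (u * H x + v * K x))
      = expect N p G + (u * expect N p H + v * expect N p K) := by
  unfold expect
  rw [Finset.mul_sum, Finset.mul_sum, ← Finset.sum_add_distrib, ← Finset.sum_add_distrib]
  exact Finset.sum_congr rfl fun x _ => by ring

lemma split3 (G H : (Fin N → Bool) → ℝ) (u : ℝ) (w : Fin N → ℝ)
    (K : Fin N → (Fin N → Bool) → ℝ) :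
    expect N p (fun x => G x + (u * H x + ∑ j : Fin N, w j * K j x))
      = expect N p G + (u * expect N p H + ∑ j : Fin N, w j * expect N p (K j)) := by
  have hC : ∑ j : Fin N, w j * ∑ x : Fin N → Bool, wt N p x * K j x
      = ∑ x : Fin N → Bool, ∑ j : Fin N, w j * (wt N p x * K j x) :=
    (Finset.sum_congr rfl fun j _ => Finset.mul_sum _ _ _).trans Finset.sum_comm
  unfold expect
  rw [Finset.mul_sum, hC, ← Finset.sum_add_distrib, ← Finset.sum_add_distrib]
  refine Finset.sum_congr rfl fun x _ => ?_
  rw [mul_add, mul_add, Finset.mul_sum]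
  refine congrArg₂ (· + ·) rfl (congrArg₂ (· + ·) (by ring) ?_)
  exact Finset.sum_congr rfl fun j _ => by ring

lemma soft_sign (c L : ℝ) (hL : 0 ≤ L) :
    max (c - L) 0 - max (-c - L) 0 = Real.sign c * max (|c| - L) 0 := by
  rcases lt_trichotomy c 0 with h | h | h
  · rw [Real.sign_of_neg h, abs_of_neg h]
    have h0 : max (c - L) 0 = 0 := max_eq_right (by linarith)
    rw [h0]; ring
  · subst h; simp
  · rw [Real.sign_of_pos h, abs_of_pos h]
    have h0 : max (-c - L) 0 = 0 := max_eq_right (by linarith)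
    rw [h0]; ring

lemma div_trick {σ pq M1 M2 : ℝ} (hσ : 0 < σ) (hpq : 0 < pq) (h2 : σ^2 = 4*pq) :
    (σ*M1 - σ*M2)/(2*pq) = 2/σ * (M1 - M2) := by
  have hσne : σ ≠ 0 := ne_of_gt hσ
  have hpqne : (2*pq : ℝ) ≠ 0 := by positivity
  field_simp
  linear_combination (M1 - M2) * h2

end Aux

/-- Theorem 2.2(c): any minimizer of the ℓ1-regularized objective satisfies the
soft-thresholding formula, in both equivalent forms. -/
theorem stmt_7 (N : ℕ) (p : ℝ) (hp : 0 < p) (hp1 : p < 1)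
    (f : (Fin N → Bool) → ℝ) (lam : ℝ) (hlam : 0 ≤ lam) (θ : Fin (N + 1) → ℝ)
    (hmin : ∀ θ' : Fin (N + 1) → ℝ,
      Rres N p f θ + lam * ∑ i : Fin N, |θ i.succ|
        ≤ Rres N p f θ' + lam * ∑ i : Fin N, |θ' i.succ|) :
    ∀ i : Fin N,
      θ i.succ = (2 / sigma p) *
          (max (coeff N p f {i} - lam / sigma p) 0
            - max (-coeff N p f {i} - lam / sigma p) 0) ∧
      θ i.succ = (2 / sigma p) * Real.sign (coeff N p f {i}) *
          max (|coeff N p f {i}| - lam / sigma p) 0 := by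
  intro i
  have hσ : 0 < sigma p := sigma_pos hp hp1
  have hσne : sigma p ≠ 0 := ne_of_gt hσ
  have hσ2 : (sigma p)^2 = 4*(p*(1-p)) := sigma_sq hp hp1
  have hpq : (0:ℝ) < p*(1-p) := mul_pos hp (by linarith)
  -- E[f·X] = σc/2
  have hfX : expect N p (fun x => f x * ((if x i then (1:ℝ) else 0) - p))
      = sigma p * coeff N p f {i} / 2 := by
    rw [coeff_single N p f i]
    field_simp
  -- E[res·X]
  have hcc : expect N p (fun x =>
        (f x - θ 0 - ∑ j : Fin N, θ j.succ * (if x j then (1:ℝ) else 0))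
          * ((if x i then (1:ℝ) else 0) - p))
      = sigma p * coeff N p f {i} / 2 - θ i.succ * (p*(1-p)) := by
    have e2 : (fun x : Fin N → Bool =>
          (f x - θ 0 - ∑ j : Fin N, θ j.succ * (if x j then (1:ℝ) else 0))
            * ((if x i then (1:ℝ) else 0) - p))
        = fun x => f x * ((if x i then (1:ℝ) else 0) - p)
            + ((-θ 0) * ((if x i then (1:ℝ) else 0) - p)
              + ∑ j : Fin N, (-θ j.succ)
                  * ((if x j then (1:ℝ) else 0) * ((if x i then (1:ℝ) else 0) - p))) := by
      funext x
      have hs : ∑ j : Fin N, (-θ j.succ)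
            * ((if x j then (1:ℝ) else 0) * ((if x i then (1:ℝ) else 0) - p))
          = -((∑ j : Fin N, θ j.succ * (if x j then (1:ℝ) else 0))
              * ((if x i then (1:ℝ) else 0) - p)) := by
        rw [Finset.sum_mul, ← Finset.sum_neg_distrib]
        exact Finset.sum_congr rfl fun j _ => by ring
      rw [hs]
      ring
    rw [e2, split3 N p _ _ _ _ _, expect_Xval N p i, hfX]
    have hjs : ∀ j : Fin N,
        expect N p (fun x => (if x j then (1:ℝ) else 0) * ((if x i then (1:ℝ) else 0) - p))
          = if j = i then p*(1-p) else 0 := by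
      intro j
      by_cases hji : j = i
      · subst hji; rw [if_pos rfl]; exact expect_XX N p j
      · rw [if_neg hji]; exact expect_XjXi N p i j hji
    simp only [hjs, mul_ite, mul_zero, Finset.sum_ite_eq', Finset.mem_univ, if_true]
    ring
  -- main inequality
  have hH : ∀ t : ℝ, (p*(1-p)) * (θ i.succ)^2 - (sigma p * coeff N p f {i}) * (θ i.succ)
        + lam * |θ i.succ|
      ≤ (p*(1-p)) * t^2 - (sigma p * coeff N p f {i}) * t + lam * |t| := by
    intro t
    set θ' : Fin (N+1) → ℝ := fun j =>
      if j = i.succ then t else if j = 0 then θ 0 - (t - θ i.succ)*p else θ j with hθ'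
    have h0 : θ' 0 = θ 0 - (t - θ i.succ)*p := by
      have hne : (0 : Fin (N+1)) ≠ i.succ := (Fin.succ_ne_zero i).symm
      simp [hθ', hne]
    have hsucc : ∀ j : Fin N, θ' j.succ = if j = i then t else θ j.succ := by
      intro j
      by_cases hji : j = i
      · subst hji; simp [hθ']
      · have hne : j.succ ≠ i.succ := fun hcon => hji (Fin.succ_inj.mp hcon)
        simp [hθ', hne, Fin.succ_ne_zero j, hji]
    have hsum : ∀ x : Fin N → Bool,
        ∑ j : Fin N, θ' j.succ * (if x j then (1:ℝ) else 0)
          = (∑ j : Fin N, θ j.succ * (if x j then (1:ℝ) else 0))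
            + (t - θ i.succ) * (if x i then (1:ℝ) else 0) := by
      intro x
      have hterm : ∀ j : Fin N, θ' j.succ * (if x j then (1:ℝ) else 0)
          = θ j.succ * (if x j then (1:ℝ) else 0)
            + (if j = i then (t - θ i.succ) * (if x i then (1:ℝ) else 0) else 0) := by
        intro j
        rw [hsucc j]
        by_cases hji : j = i
        · subst hji; rw [if_pos rfl, if_pos rfl]; ring
        · rw [if_neg hji, if_neg hji, add_zero]
      rw [Finset.sum_congr rfl (fun j _ => hterm j), Finset.sum_add_distrib,
        Finset.sum_ite_eq' Finset.univ i]
      simp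
    have hRA : Rres N p f θ' = Rres N p f θ
        + ((-2*(t - θ i.succ)) * (sigma p * coeff N p f {i} / 2 - θ i.succ * (p*(1-p)))
          + (t - θ i.succ)^2 * (p*(1-p))) := by
      have e1 : Rres N p f θ' = expect N p (fun x =>
          (f x - θ 0 - ∑ j : Fin N, θ j.succ * (if x j then (1:ℝ) else 0))^2
          + ((-2*(t - θ i.succ)) * ((f x - θ 0 - ∑ j : Fin N, θ j.succ * (if x j then (1:ℝ) else 0))
                * ((if x i then (1:ℝ) else 0) - p))
            + (t - θ i.succ)^2 * (((if x i then (1:ℝ) else 0) - p)^2))) := by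
        unfold Rres
        congr 1
        funext x
        rw [h0, hsum x]
        ring
      rw [e1, split2 N p _ _ _ _ _, hcc, expect_Xsq N p i]
      rfl
    have hReg : ∑ j : Fin N, |θ' j.succ| = (∑ j : Fin N, |θ j.succ|) + (|t| - |θ i.succ|) := by
      have hterm : ∀ j : Fin N, |θ' j.succ|
          = |θ j.succ| + (if j = i then |t| - |θ i.succ| else 0) := by
        intro j
        rw [hsucc j]
        by_cases hji : j = i
        · subst hji; rw [if_pos rfl, if_pos rfl]; ring
        · rw [if_neg hji, if_neg hji, add_zero]
      rw [Finset.sum_congr rfl (fun j _ => hterm j), Finset.sum_add_distrib,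
        Finset.sum_ite_eq' Finset.univ i]
      simp
    have hm := hmin θ'
    rw [hRA, hReg] at hm
    have hid : (-2*(t - θ i.succ)) * (sigma p * coeff N p f {i} / 2 - θ i.succ * (p*(1-p)))
          + (t - θ i.succ)^2 * (p*(1-p))
        = ((p*(1-p)) * t^2 - (sigma p * coeff N p f {i}) * t)
          - ((p*(1-p)) * (θ i.succ)^2 - (sigma p * coeff N p f {i}) * (θ i.succ)) := by
      ring
    rw [hid] at hm
    rw [mul_add] at hm
    linarith
  have key := soft_min hpq hlam (θ i.succ) hH
  have hmax1 : max (sigma p * coeff N p f {i} - lam) 0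
      = sigma p * max (coeff N p f {i} - lam / sigma p) 0 := by
    have h1 : sigma p * (coeff N p f {i} - lam / sigma p) = sigma p * coeff N p f {i} - lam := by
      field_simp
    rw [mul_max_of_nonneg _ _ hσ.le, h1, mul_zero]
  have hmax2 : max (-(sigma p * coeff N p f {i}) - lam) 0
      = sigma p * max (-coeff N p f {i} - lam / sigma p) 0 := by
    have h1 : sigma p * (-coeff N p f {i} - lam / sigma p)
        = -(sigma p * coeff N p f {i}) - lam := by
      field_simp
    rw [mul_max_of_nonneg _ _ hσ.le, h1, mul_zero]
  have con1 : θ i.succ = (2 / sigma p) *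
      (max (coeff N p f {i} - lam / sigma p) 0
        - max (-coeff N p f {i} - lam / sigma p) 0) := by
    rw [key, hmax1, hmax2]
    exact div_trick hσ hpq hσ2
  refine ⟨con1, ?_⟩
  rw [con1, soft_sign (coeff N p f {i}) (lam / sigma p) (div_nonneg hlam hσ.le), ← mul_assoc]

end
end Paper
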